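/- For all x ≥ 0, R(x) ≥ π / ((π-1)x + √(x² + 2π)), where R(x) = √(2π)·Q(x)·e^{x²/2} and Q is the Gaussian Q-function. -/

import Mathlib

open Real MeasureTheory

noncomputable def Qfun (x : ℝ) : ℝ :=
  (1 / Real.sqrt (2 * Real.pi)) * ∫ t in Set.Ioi x, Real.exp (-(t ^ 2) / 2)

noncomputable def Rfun (x : ℝ) : ℝ :=
  Real.sqrt (2 * Real.pi) * Qfun x * Real.exp (x ^ 2 / 2)

noncomputable def gauss' (t : ℝ) : ℝ := Real.exp (-(t ^ 2) / 2)

noncomputable def Ifun' (x : ℝ) : ℝ := ∫ t in Set.Ioi x, gauss' t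

noncomputable def sfun' (x : ℝ) : ℝ := Real.sqrt (x ^ 2 + 2 * Real.pi)

noncomputable def ffun' (x : ℝ) : ℝ := Real.pi / ((Real.pi - 1) * x + sfun' x)

noncomputable def Wfun' (x : ℝ) : ℝ := Ifun' x - Real.exp (-(x ^ 2) / 2) * ffun' x

lemma gauss'_integrable : Integrable gauss' := by
  have h := integrable_exp_neg_mul_sq (b := (1:ℝ)/2) (by norm_num)
  convert h using 2 with t
  unfold gauss'
  ring_nf

lemma gauss'_continuous : Continuous gauss' := by
  unfold gauss'
  fun_prop

lemma gauss'_pos (t : ℝ) : 0 < gauss' t := Real.exp_pos _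

lemma Ifun'_eq (x : ℝ) : Ifun' x = Ifun' 0 - ∫ t in (0:ℝ)..x, gauss' t := by
  have h1 := intervalIntegral.integral_Iic_add_Ioi (f := gauss') (b := x) (μ := volume)
    gauss'_integrable.integrableOn gauss'_integrable.integrableOn
  have h2 := intervalIntegral.integral_Iic_add_Ioi (f := gauss') (b := (0:ℝ)) (μ := volume)
    gauss'_integrable.integrableOn gauss'_integrable.integrableOn
  have h3 := intervalIntegral.integral_Iic_sub_Iic (f := gauss') (μ := volume) (a := (0:ℝ)) (b := x)
    gauss'_integrable.integrableOn gauss'_integrable.integrableOn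
  unfold Ifun'
  linarith

lemma Ifun'_hasDerivAt (x : ℝ) : HasDerivAt Ifun' (-(gauss' x)) x := by
  have h : ∀ y, Ifun' y = Ifun' 0 - ∫ t in (0:ℝ)..y, gauss' t := Ifun'_eq
  have hd : HasDerivAt (fun u => ∫ t in (0:ℝ)..u, gauss' t) (gauss' x) x :=
    intervalIntegral.integral_hasDerivAt_right
      (gauss'_integrable.intervalIntegrable)
      (gauss'_continuous.stronglyMeasurable.stronglyMeasurableAtFilter)
      gauss'_continuous.continuousAt
  have := hd.const_sub (Ifun' 0)
  rw [show Ifun' = _ from funext h]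
  exact this

lemma Ifun'_tendsto : Filter.Tendsto Ifun' Filter.atTop (nhds 0) := by
  have h := MeasureTheory.intervalIntegral_tendsto_integral_Ioi (μ := volume) (f := gauss') 0
    gauss'_integrable.integrableOn Filter.tendsto_id
  have h2 : Filter.Tendsto (fun x => Ifun' 0 - ∫ t in (0:ℝ)..x, gauss' t) Filter.atTop
      (nhds (Ifun' 0 - Ifun' 0)) := Filter.Tendsto.const_sub _ h
  rw [sub_self] at h2
  refine h2.congr fun x => (Ifun'_eq x).symm

lemma sfun'_sq (x : ℝ) : sfun' x ^ 2 = x ^ 2 + 2 * Real.pi := by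
  unfold sfun'
  rw [Real.sq_sqrt]
  positivity

lemma sfun'_pos (x : ℝ) : 0 < sfun' x := by
  unfold sfun'
  positivity

lemma sfun'_gt (x : ℝ) (hx : 0 ≤ x) : x < sfun' x := by
  nlinarith [sfun'_sq x, sfun'_pos x, Real.pi_pos]

lemma dfun'_pos (x : ℝ) (hx : 0 ≤ x) : 0 < (Real.pi - 1) * x + sfun' x := by
  have := sfun'_pos x
  have := Real.pi_gt_three
  nlinarith

lemma Wfun'_zero : Wfun' 0 = 0 := by
  have h0 : Ifun' 0 = Real.sqrt (2 * Real.pi) / 2 := by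
    unfold Ifun' gauss'
    have := integral_gaussian_Ioi (1/2)
    have he : ∀ t : ℝ, Real.exp (-(1/2) * t ^ 2) = Real.exp (-(t ^ 2) / 2) := by
      intro t; ring_nf
    rw [show (fun t : ℝ => Real.exp (-(t ^ 2) / 2)) = fun t : ℝ => Real.exp (-(1/2) * t ^ 2)
      from funext fun t => (he t).symm]
    rw [this]
    congr 1
    rw [div_div_eq_mul_div, mul_comm]
    norm_num
  have hs : sfun' 0 = Real.sqrt (2 * Real.pi) := by unfold sfun'; norm_num
  have hsq : Real.sqrt (2 * Real.pi) ^ 2 = 2 * Real.pi := Real.sq_sqrt (by positivity)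
  have hpos : 0 < Real.sqrt (2 * Real.pi) := Real.sqrt_pos.mpr (by positivity)
  unfold Wfun' ffun'
  rw [h0, hs]
  rw [show (-((0:ℝ) ^ 2) / 2) = 0 by norm_num, Real.exp_zero,
    show (Real.pi - 1) * 0 + Real.sqrt (2 * Real.pi) = Real.sqrt (2 * Real.pi) by ring]
  rw [one_mul, sub_eq_zero, div_eq_div_iff (by norm_num) hpos.ne']
  nlinarith [hsq]

noncomputable def fd' (x : ℝ) : ℝ :=
  -(Real.pi * ((Real.pi - 1) + x / sfun' x)) / ((Real.pi - 1) * x + sfun' x) ^ 2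

noncomputable def Wd' (x : ℝ) : ℝ :=
  Real.exp (-(x ^ 2) / 2) * (x * ffun' x - 1 - fd' x)

lemma sfun'_hasDerivAt (x : ℝ) : HasDerivAt sfun' (x / sfun' x) x := by
  have h1 : HasDerivAt (fun y : ℝ => y ^ 2 + 2 * Real.pi) (2 * x) x := by
    simpa using (hasDerivAt_pow 2 x).add_const (2 * Real.pi)
  have h2 := h1.sqrt (by positivity)
  refine h2.congr_deriv ?_
  unfold sfun'
  have hs0 : Real.sqrt (x ^ 2 + 2 * Real.pi) ≠ 0 := by positivity
  field_simp

lemma ffun'_hasDerivAt (x : ℝ) (hx : 0 ≤ x) : HasDerivAt ffun' (fd' x) x := by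
  have hs := sfun'_hasDerivAt x
  have hd : HasDerivAt (fun y => (Real.pi - 1) * y + sfun' y) ((Real.pi - 1) + x / sfun' x) x := by
    have := ((hasDerivAt_id x).const_mul (Real.pi - 1)).add hs
    exact this.congr_deriv (by ring)
  have hne := (dfun'_pos x hx).ne'
  have h := (hasDerivAt_const x Real.pi).div hd hne
  refine h.congr_deriv ?_
  unfold fd'
  field_simp
  ring

lemma Wfun'_hasDerivAt (x : ℝ) (hx : 0 ≤ x) : HasDerivAt Wfun' (Wd' x) x := by
  have hI := Ifun'_hasDerivAt x
  have hexp : HasDerivAt (fun y : ℝ => Real.exp (-(y ^ 2) / 2)) (Real.exp (-(x ^ 2) / 2) * (-x)) x := by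
    have hin : HasDerivAt (fun y : ℝ => -(y ^ 2) / 2) (-x) x := by
      have := ((hasDerivAt_pow 2 x).neg).div_const 2
      refine this.congr_deriv ?_
      push_cast
      ring
    exact hin.exp
  have hf := ffun'_hasDerivAt x hx
  have h := hI.sub (hexp.mul hf)
  refine h.congr_deriv ?_
  unfold Wd' gauss'
  ring

lemma core_nonneg (x : ℝ) (hx : 0 ≤ x)
    (h : x ^ 2 * (1 - (Real.pi - 3) ^ 2) ≤ 2 * Real.pi * (Real.pi - 3) ^ 2) :
    0 ≤ x * ffun' x - 1 - fd' x := by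
  set s := sfun' x with hs_def
  have hs2 : s ^ 2 = x ^ 2 + 2 * Real.pi := sfun'_sq x
  have hspos : 0 < s := sfun'_pos x
  have hxs : x < s := sfun'_gt x hx
  have hdpos : 0 < (Real.pi - 1) * x + s := dfun'_pos x hx
  have hpi3 := Real.pi_gt_three
  -- x ≤ (π - 3) * s
  have hc : x ≤ (Real.pi - 3) * s := by
    nlinarith [sq_nonneg x, mul_pos (sub_pos.mpr hpi3) hspos]
  set d := (Real.pi - 1) * x + s with hd_def
  have hId : (x * Real.pi * s * d - s * d ^ 2 + Real.pi * ((Real.pi - 1) * s + x)) * (s + x)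
      = Real.pi * ((s - x) * ((Real.pi - 3) * s - x)) := by
    rw [hd_def]
    linear_combination (-(s ^ 2) - (Real.pi - 1) * x * s) * hs2
  have hnum : 0 ≤ x * Real.pi * s * d - s * d ^ 2 + Real.pi * ((Real.pi - 1) * s + x) := by
    have h1 : 0 ≤ Real.pi * ((s - x) * ((Real.pi - 3) * s - x)) := by
      have := Real.pi_pos
      have h2 : 0 ≤ s - x := by linarith
      have h3 : 0 ≤ (Real.pi - 3) * s - x := by linarith
      positivity
    nlinarith [hId, h1, add_pos hspos (lt_of_le_of_lt hx hxs)]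
  have heq : x * ffun' x - 1 - fd' x
      = (x * Real.pi * s * d - s * d ^ 2 + Real.pi * ((Real.pi - 1) * s + x)) / (s * d ^ 2) := by
    unfold ffun' fd'
    rw [← hs_def, ← hd_def]
    field_simp
    ring
  rw [heq]
  exact div_nonneg hnum (by positivity)

lemma core_nonpos (x : ℝ) (hx : 0 ≤ x)
    (h : 2 * Real.pi * (Real.pi - 3) ^ 2 ≤ x ^ 2 * (1 - (Real.pi - 3) ^ 2)) :
    x * ffun' x - 1 - fd' x ≤ 0 := by
  set s := sfun' x with hs_def
  have hs2 : s ^ 2 = x ^ 2 + 2 * Real.pi := sfun'_sq x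
  have hspos : 0 < s := sfun'_pos x
  have hxs : x < s := sfun'_gt x hx
  have hdpos : 0 < (Real.pi - 1) * x + s := dfun'_pos x hx
  have hpi3 := Real.pi_gt_three
  have hc : (Real.pi - 3) * s ≤ x := by
    nlinarith [mul_pos (sub_pos.mpr hpi3) hspos]
  set d := (Real.pi - 1) * x + s with hd_def
  have hId : (x * Real.pi * s * d - s * d ^ 2 + Real.pi * ((Real.pi - 1) * s + x)) * (s + x)
      = Real.pi * ((s - x) * ((Real.pi - 3) * s - x)) := by
    rw [hd_def]
    linear_combination (-(s ^ 2) - (Real.pi - 1) * x * s) * hs2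
  have hnum : x * Real.pi * s * d - s * d ^ 2 + Real.pi * ((Real.pi - 1) * s + x) ≤ 0 := by
    have h1 : Real.pi * ((s - x) * ((Real.pi - 3) * s - x)) ≤ 0 := by
      have hp := Real.pi_pos
      have h2 : 0 ≤ s - x := by linarith
      have h3 : (Real.pi - 3) * s - x ≤ 0 := by linarith
      nlinarith [mul_nonneg (mul_nonneg hp.le h2) (show (0:ℝ) ≤ x - (Real.pi - 3) * s by linarith)]
    nlinarith [hId, h1, add_pos hspos (lt_of_le_of_lt hx hxs)]
  have heq : x * ffun' x - 1 - fd' x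
      = (x * Real.pi * s * d - s * d ^ 2 + Real.pi * ((Real.pi - 1) * s + x)) / (s * d ^ 2) := by
    unfold ffun' fd'
    rw [← hs_def, ← hd_def]
    field_simp
    ring
  rw [heq]
  exact div_nonpos_of_nonpos_of_nonneg hnum (by positivity)

lemma Wfun'_continuousOn : ContinuousOn Wfun' (Set.Ici 0) := by
  have hI : Continuous Ifun' := by
    have : Differentiable ℝ Ifun' := fun y => (Ifun'_hasDerivAt y).differentiableAt
    exact this.continuous
  have hsc : Continuous sfun' := by
    unfold sfun'
    fun_prop
  have hdc : Continuous (fun y => (Real.pi - 1) * y + sfun' y) := by fun_prop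
  have hfc : ContinuousOn ffun' (Set.Ici 0) := by
    unfold ffun'
    exact ContinuousOn.div continuousOn_const hdc.continuousOn
      fun y hy => (dfun'_pos y hy).ne'
  have hec : Continuous (fun y : ℝ => Real.exp (-(y ^ 2) / 2)) := by fun_prop
  exact hI.continuousOn.sub (hec.continuousOn.mul hfc)

lemma exp_sq_tendsto : Filter.Tendsto (fun y : ℝ => Real.exp (-(y ^ 2) / 2))
    Filter.atTop (nhds 0) := by
  apply Real.tendsto_exp_atBot.comp
  apply Filter.Tendsto.atBot_div_const (by norm_num : (0:ℝ) < 2)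
  exact Filter.tendsto_neg_atTop_atBot.comp (Filter.tendsto_pow_atTop two_ne_zero)

lemma Wfun'_tendsto : Filter.Tendsto Wfun' Filter.atTop (nhds 0) := by
  have hb : Filter.Tendsto (fun y : ℝ => Real.exp (-(y ^ 2) / 2) * ffun' y)
      Filter.atTop (nhds 0) := by
    apply squeeze_zero' (f := fun y => Real.exp (-(y ^ 2) / 2) * ffun' y)
      (g := fun y => Real.exp (-(y ^ 2) / 2) * (Real.pi / Real.sqrt (2 * Real.pi)))
    · filter_upwards [Filter.eventually_ge_atTop (0:ℝ)] with y hy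
      have h := dfun'_pos y hy
      have hp := Real.pi_pos
      unfold ffun'
      positivity
    · filter_upwards [Filter.eventually_ge_atTop (0:ℝ)] with y hy
      apply mul_le_mul_of_nonneg_left _ (Real.exp_pos _).le
      unfold ffun'
      apply div_le_div_of_nonneg_left Real.pi_pos.le (by positivity)
      have h1 : Real.sqrt (2 * Real.pi) ≤ sfun' y := by
        unfold sfun'
        apply Real.sqrt_le_sqrt
        nlinarith
      have h2 : 0 ≤ (Real.pi - 1) * y := by
        have := Real.pi_gt_three
        nlinarith
      linarith
    · simpa using exp_sq_tendsto.mul_const (Real.pi / Real.sqrt (2 * Real.pi))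
  have := Ifun'_tendsto.sub hb
  rw [sub_zero] at this
  exact this

lemma pi_sq_bound : 0 < 1 - (Real.pi - 3) ^ 2 := by
  have h1 := Real.pi_gt_three
  have h2 := Real.pi_lt_d2
  nlinarith

lemma Wfun'_nonneg (x : ℝ) (hx : 0 ≤ x) : 0 ≤ Wfun' x := by
  rcases le_or_gt (x ^ 2 * (1 - (Real.pi - 3) ^ 2)) (2 * Real.pi * (Real.pi - 3) ^ 2) with hcase | hcase
  · -- monotone on [0, x]
    have hmono : MonotoneOn Wfun' (Set.Icc 0 x) := by
      apply monotoneOn_of_deriv_nonneg (convex_Icc 0 x)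
        (Wfun'_continuousOn.mono (fun y hy => hy.1))
      · intro y hy
        rw [interior_Icc] at hy
        exact ((Wfun'_hasDerivAt y hy.1.le).differentiableAt).differentiableWithinAt
      · intro y hy
        rw [interior_Icc] at hy
        rw [(Wfun'_hasDerivAt y hy.1.le).deriv]
        unfold Wd'
        apply mul_nonneg (Real.exp_pos _).le
        apply core_nonneg y hy.1.le
        have hyx : y ^ 2 ≤ x ^ 2 := by nlinarith [hy.1, hy.2]
        nlinarith [pi_sq_bound]
    have := hmono (Set.mem_Icc.mpr ⟨le_refl 0, hx⟩) (Set.mem_Icc.mpr ⟨hx, le_refl x⟩) hx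
    rw [Wfun'_zero] at this
    exact this
  · -- antitone on [x, ∞)
    have hanti : AntitoneOn Wfun' (Set.Ici x) := by
      apply antitoneOn_of_deriv_nonpos (convex_Ici x)
        (Wfun'_continuousOn.mono (fun y hy => le_trans hx hy))
      · intro y hy
        rw [interior_Ici] at hy
        exact ((Wfun'_hasDerivAt y (le_trans hx hy.le)).differentiableAt).differentiableWithinAt
      · intro y hy
        rw [interior_Ici] at hy
        rw [(Wfun'_hasDerivAt y (le_trans hx hy.le)).deriv]
        unfold Wd'
        apply mul_nonpos_of_nonneg_of_nonpos (Real.exp_pos _).le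
        apply core_nonpos y (le_trans hx hy.le)
        have hxy : x < y := hy
        have hyx : x ^ 2 ≤ y ^ 2 := by nlinarith
        nlinarith [pi_sq_bound]
    have hev : ∀ᶠ y in Filter.atTop, Wfun' y ≤ Wfun' x := by
      filter_upwards [Filter.eventually_ge_atTop x] with y hy
      exact hanti (Set.mem_Ici.mpr (le_refl x)) (Set.mem_Ici.mpr hy) hy
    exact le_of_tendsto Wfun'_tendsto hev

theorem stmt6 (x : ℝ) (hx : 0 ≤ x) :
    Rfun x ≥ Real.pi / ((Real.pi - 1) * x + Real.sqrt (x ^ 2 + 2 * Real.pi)) := by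
  have hW := Wfun'_nonneg x hx
  have hsqrt : (0:ℝ) < Real.sqrt (2 * Real.pi) := Real.sqrt_pos.mpr (by positivity)
  have hR : Rfun x = Ifun' x * Real.exp (x ^ 2 / 2) := by
    unfold Rfun Qfun Ifun' gauss'
    field_simp
  have hI : Real.exp (-(x ^ 2) / 2) * ffun' x ≤ Ifun' x := by
    unfold Wfun' at hW
    linarith
  have hgoal : ffun' x ≤ Rfun x := by
    rw [hR]
    calc ffun' x = Real.exp (-(x ^ 2) / 2) * ffun' x * Real.exp (x ^ 2 / 2) := by
          rw [mul_comm (Real.exp (-(x ^ 2) / 2)) (ffun' x), mul_assoc, ← Real.exp_add,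
            show -(x ^ 2) / 2 + x ^ 2 / 2 = 0 by ring, Real.exp_zero, mul_one]
      _ ≤ Ifun' x * Real.exp (x ^ 2 / 2) :=
          mul_le_mul_of_nonneg_right hI (Real.exp_pos _).le
  exact hgoal
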